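/- Let n ≥ 3 be an integer, ρ > 0 a real number, and ω ∈ (0, 2π); set θ = ω/n. Let M be the real n×n circulant matrix whose (j,k) entry is (1/(ρ² sin θ))·(−2cos θ) when j = k, (1/(ρ² sin θ))·1 when k ≡ j±1 (mod n), and 0 otherwise. Then M is symmetric and invertible, and the associated quadratic form x ↦ xᵀMx on ℝⁿ has signature (+,−,…,−): there exist linear subspaces W₊, W₋ of ℝⁿ with dim W₊ = 1, dim W₋ = n−1, ℝⁿ = W₊ ⊕ W₋, such that xᵀMx > 0 for every nonzero x ∈ W₊ and xᵀMx < 0 for every nonzero x ∈ W₋. -/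

import Mathlib

open Real Matrix Finset
open scoped ComplexConjugate

namespace CircAux

noncomputable def chi (n : ℕ) (u : ZMod n) : ℂ :=
  Complex.exp (2 * Real.pi * Complex.I / n) ^ u.val

variable (n : ℕ) [NeZero n]

lemma prim : IsPrimitiveRoot (Complex.exp (2 * Real.pi * Complex.I / n)) n :=
  Complex.isPrimitiveRoot_exp n (NeZero.ne n)

lemma zeta_pow_mod (a : ℕ) :
    Complex.exp (2 * Real.pi * Complex.I / n) ^ a
      = Complex.exp (2 * Real.pi * Complex.I / n) ^ (a % n) := by
  conv_lhs => rw [← Nat.mod_add_div a n]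
  rw [pow_add, pow_mul, (prim n).pow_eq_one, one_pow, mul_one]

lemma chi_add (u v : ZMod n) : chi n (u + v) = chi n u * chi n v := by
  unfold chi
  rw [← pow_add, ZMod.val_add, ← zeta_pow_mod]

omit [NeZero n] in
lemma chi_zero : chi n 0 = 1 := by
  unfold chi; simp

lemma chi_mul_neg (u : ZMod n) : chi n u * chi n (-u) = 1 := by
  rw [← chi_add, add_neg_cancel, chi_zero]

lemma chi_conj (u : ZMod n) : conj (chi n u) = chi n (-u) := by
  have habs : ‖chi n u‖ = 1 := by
    unfold chi
    rw [norm_pow, Complex.norm_exp]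
    have : (2 * (Real.pi : ℂ) * Complex.I / n).re = 0 := by
      simp [Complex.div_re]
    rw [this, Real.exp_zero, one_pow]
  have h1 : conj (chi n u) * chi n u = 1 := by
    rw [mul_comm, Complex.mul_conj, ← Complex.sq_norm, habs]
    norm_num
  have h2 : chi n (-u) * chi n u = 1 := by rw [mul_comm]; exact chi_mul_neg n u
  have hne : chi n u ≠ 0 := by
    intro h; rw [h, mul_zero] at h1; exact one_ne_zero h1.symm
  calc conj (chi n u) = conj (chi n u) * chi n u * (chi n u)⁻¹ := by
        field_simp
    _ = chi n (-u) * chi n u * (chi n u)⁻¹ := by rw [h1, h2]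
    _ = chi n (-u) := by field_simp

lemma chi_sum (m : ZMod n) : ∑ k : ZMod n, chi n (k * m) = if m = 0 then (n : ℂ) else 0 := by
  by_cases hm : m = 0
  · simp [hm, chi_zero]
  · rw [if_neg hm]
    have hpt : ∀ k : ZMod n, chi n (k * m) = (chi n m) ^ k.val := by
      intro k
      unfold chi
      rw [ZMod.val_mul, ← zeta_pow_mod, pow_mul, ← pow_mul, mul_comm k.val, pow_mul]
    simp_rw [hpt]
    have hbij : ∑ k : ZMod n, (chi n m) ^ k.val = ∑ i ∈ Finset.range n, (chi n m) ^ i := by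
      refine Finset.sum_bij' (fun k _ => k.val) (fun i hi => (i : ZMod n)) ?_ ?_ ?_ ?_ ?_
      · intro a _; exact Finset.mem_range.mpr a.val_lt
      · intro a _; exact Finset.mem_univ _
      · intro a _; exact ZMod.natCast_zmod_val a
      · intro a ha; exact ZMod.val_cast_of_lt (Finset.mem_range.mp ha)
      · intro a _; rfl
    rw [hbij]
    have hne1 : chi n m ≠ 1 := by
      intro h
      unfold chi at h
      have := ((prim n).pow_eq_one_iff_dvd m.val).mp h
      have hv : m.val = 0 := Nat.eq_zero_of_dvd_of_lt this m.val_lt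
      exact hm (by rwa [ZMod.val_eq_zero] at hv)
    have hpow : (chi n m) ^ n = 1 := by
      unfold chi
      rw [← pow_mul, pow_mul', (prim n).pow_eq_one, one_pow]
    rw [geom_sum_eq hne1, hpow, sub_self, zero_div]


lemma chi_re (k : ZMod n) :
    chi n k + chi n (-k) = ((2 * Real.cos (2 * Real.pi * k.val / n) : ℝ) : ℂ) := by
  have h1 : chi n k = Complex.exp (((2 * Real.pi * k.val / n : ℝ) : ℂ) * Complex.I) := by
    unfold chi
    rw [← Complex.exp_nat_mul]
    congr 1
    push_cast
    ring
  rw [← chi_conj, h1, Complex.add_conj, Complex.exp_ofReal_mul_I_re]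

lemma corr (x : ZMod n → ℝ) (a : ZMod n) :
    ∑ k : ZMod n, (∑ j : ZMod n, (x j : ℂ) * chi n (k * j)) *
        conj (∑ j : ZMod n, (x j : ℂ) * chi n (k * j)) * chi n (k * a)
      = n * ∑ j : ZMod n, (x (j - a) : ℂ) * x j := by
  have key : ∀ k : ZMod n,
      (∑ j : ZMod n, (x j : ℂ) * chi n (k * j)) *
          conj (∑ j : ZMod n, (x j : ℂ) * chi n (k * j)) * chi n (k * a)
      = ∑ j : ZMod n, ∑ j' : ZMod n, (x j : ℂ) * x j' * chi n (k * (j - j' + a)) := by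
    intro k
    rw [map_sum, Finset.sum_mul_sum, Finset.sum_mul]
    refine Finset.sum_congr rfl fun j _ => ?_
    rw [Finset.sum_mul]
    refine Finset.sum_congr rfl fun j' _ => ?_
    rw [_root_.map_mul, Complex.conj_ofReal, chi_conj]
    have h : chi n (k * j) * chi n (-(k * j')) * chi n (k * a)
        = chi n (k * (j - j' + a)) := by
      rw [← chi_add, ← chi_add]
      congr 1
      ring
    calc (x j : ℂ) * chi n (k * j) * ((x j' : ℂ) * chi n (-(k * j'))) * chi n (k * a)
        = (x j : ℂ) * x j' * (chi n (k * j) * chi n (-(k * j')) * chi n (k * a)) := by ring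
      _ = (x j : ℂ) * x j' * chi n (k * (j - j' + a)) := by rw [h]
  simp_rw [key]
  have swap : ∑ k : ZMod n, ∑ j : ZMod n, ∑ j' : ZMod n,
        (x j : ℂ) * x j' * chi n (k * (j - j' + a))
      = ∑ j : ZMod n, ∑ j' : ZMod n, (x j : ℂ) * x j' *
          ∑ k : ZMod n, chi n (k * (j - j' + a)) := by
    rw [Finset.sum_comm]
    refine Finset.sum_congr rfl fun j _ => ?_
    rw [Finset.sum_comm]
    refine Finset.sum_congr rfl fun j' _ => ?_
    rw [Finset.mul_sum]
  rw [swap]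
  simp_rw [chi_sum]
  have hcond : ∀ j j' : ZMod n, (j - j' + a = 0) = (j' = j + a) := fun j j' =>
    propext ⟨fun h => by linear_combination -h, fun h => by rw [h]; ring⟩
  simp_rw [hcond, mul_ite, mul_zero, Finset.sum_ite_eq' Finset.univ, Finset.mem_univ, if_true]
  have := Fintype.sum_equiv (Equiv.addRight a)
    (fun j : ZMod n => (x j : ℂ) * (x (j + a) : ℂ) * (n : ℂ))
    (fun i : ZMod n => (x (i - a) : ℂ) * (x i : ℂ) * (n : ℂ))
    (fun j => by simp)
  rw [this, ← Finset.sum_mul, mul_comm]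


lemma cos_lt_aux (n : ℕ) (hn : 3 ≤ n) (θ : ℝ) (hθ0 : 0 < θ) (hθ : θ < 2 * π / n)
    (v : ℕ) (hv1 : 1 ≤ v) (hv2 : v < n) : Real.cos (2 * π * v / n) < Real.cos θ := by
  have hπ := Real.pi_pos
  have hn0 : (0 : ℝ) < n := by positivity
  have main : ∀ w : ℕ, 1 ≤ w → 2 * w ≤ n → Real.cos (2 * π * w / n) < Real.cos θ := by
    intro w h1 h2
    have hw1 : (1 : ℝ) ≤ w := by exact_mod_cast h1
    have hw2 : 2 * (w : ℝ) ≤ n := by exact_mod_cast h2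
    have hwπ : 2 * π * w / n ≤ π := by
      rw [div_le_iff₀ hn0]; nlinarith
    have hθw : θ < 2 * π * w / n := by
      calc θ < 2 * π / n := hθ
        _ ≤ 2 * π * w / n := by
            rw [div_le_div_iff₀ hn0 hn0]
            nlinarith [mul_nonneg (mul_nonneg hπ.le (sub_nonneg.mpr hw1)) hn0.le]
    have hθπ : θ ≤ π := le_trans (le_of_lt (hθw.trans_le hwπ)) le_rfl
    exact Real.strictAntiOn_cos ⟨le_of_lt hθ0, hθπ⟩ ⟨by positivity, hwπ⟩ hθw
  rcases le_or_gt (2 * v) n with h | h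
  · exact main v hv1 h
  · have h1 : 1 ≤ n - v := by omega
    have h2 : 2 * (n - v) ≤ n := by omega
    have hcast : ((n - v : ℕ) : ℝ) = (n : ℝ) - v := by
      rw [Nat.cast_sub (le_of_lt hv2)]
    have heq : Real.cos (2 * π * v / n) = Real.cos (2 * π * (n - v : ℕ) / n) := by
      rw [hcast]
      have : 2 * π * ((n : ℝ) - v) / n = 2 * π - 2 * π * v / n := by
        field_simp
      rw [this, Real.cos_two_pi_sub]
    rw [heq]
    exact main (n - v) h1 h2

end CircAux
open Real Matrix Finset
open scoped ComplexConjugate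

set_option maxHeartbeats 2000000 in
/-- The circulant matrix of the bilinear form of a regular Euclidean cone-polygon with
`n ≥ 3` boundary vertices, total cone angle `ω ∈ (0, 2π)` and equal radii `ρ > 0` is
symmetric, invertible, and its quadratic form has signature `(+, −, …, −)`. -/
theorem circulant_signature (n : ℕ) (hn : 3 ≤ n) [NeZero n]
    (ρ ω : ℝ) (hρ : 0 < ρ) (hω : ω ∈ Set.Ioo 0 (2 * π))
    (θ : ℝ) (hθ : θ = ω / n)
    (M : Matrix (ZMod n) (ZMod n) ℝ)
    (hM : ∀ j k : ZMod n, M j k =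
      if k = j then 1 / (ρ ^ 2 * Real.sin θ) * (-2 * Real.cos θ)
      else if k = j + 1 ∨ k = j - 1 then 1 / (ρ ^ 2 * Real.sin θ)
      else 0) :
    M.IsSymm ∧ IsUnit M ∧
    ∃ Wp Wm : Submodule ℝ (ZMod n → ℝ),
      Module.finrank ℝ Wp = 1 ∧ Module.finrank ℝ Wm = n - 1 ∧
      IsCompl Wp Wm ∧
      (∀ x ∈ Wp, x ≠ 0 → 0 < x ⬝ᵥ M.mulVec x) ∧
      (∀ x ∈ Wm, x ≠ 0 → x ⬝ᵥ M.mulVec x < 0) := by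
  obtain ⟨hω0, hω2⟩ := hω
  have hπ := Real.pi_pos
  have hn0 : (0 : ℝ) < n := by
    have : (3 : ℝ) ≤ n := by exact_mod_cast hn
    linarith
  have hn3 : (3 : ℝ) ≤ n := by exact_mod_cast hn
  have hθ0 : 0 < θ := by rw [hθ]; positivity
  have hθlt : θ < 2 * π / n := by rw [hθ]; gcongr
  have h2πn : 2 * π / n ≤ π := by
    rw [div_le_iff₀ hn0]; nlinarith
  have hθπ : θ < π := lt_of_lt_of_le hθlt h2πn
  have hsin : 0 < Real.sin θ := Real.sin_pos_of_pos_of_lt_pi hθ0 hθπ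
  have hcosθ : Real.cos θ < 1 := by
    have := Real.strictAntiOn_cos ⟨le_rfl, hπ.le⟩ ⟨hθ0.le, hθπ.le⟩ hθ0
    rwa [Real.cos_zero] at this
  set C : ℝ := 1 / (ρ ^ 2 * Real.sin θ) with hCdef
  have hC : 0 < C := by rw [hCdef]; positivity
  -- symmetry
  have hsymm : M.IsSymm := by
    rw [Matrix.IsSymm]
    ext i j
    rw [Matrix.transpose_apply, hM j i, hM i j]
    by_cases h1 : i = j
    · subst h1; simp
    · rw [if_neg h1, if_neg (Ne.symm h1)]
      apply if_congr ?_ rfl rfl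
      constructor
      · rintro (h | h)
        · exact Or.inr (by rw [h]; ring)
        · exact Or.inl (by rw [h]; ring)
      · rintro (h | h)
        · exact Or.inr (by rw [h]; ring)
        · exact Or.inl (by rw [h]; ring)
  have h2ne : (2 : ZMod n) ≠ 0 := by
    intro h
    have h' : ((2 : ℕ) : ZMod n) = 0 := by exact_mod_cast h
    have := (ZMod.natCast_eq_zero_iff 2 n).mp h'
    have := Nat.le_of_dvd (by norm_num) this
    omega
  have h1ne : (1 : ZMod n) ≠ 0 := by
    intro h
    have h' : ((1 : ℕ) : ZMod n) = 0 := by exact_mod_cast h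
    have := (ZMod.natCast_eq_zero_iff 1 n).mp h'
    have := Nat.le_of_dvd (by norm_num) this
    omega
  have d1 : ∀ j : ZMod n, j + 1 ≠ j := fun j h => h1ne (by linear_combination h)
  have d2 : ∀ j : ZMod n, j - 1 ≠ j := fun j h => h1ne (by linear_combination -h)
  have d3 : ∀ j : ZMod n, j + 1 ≠ j - 1 := fun j h => h2ne (by linear_combination h)
  -- mulVec formula
  have hmv : ∀ y : ZMod n → ℝ, ∀ j : ZMod n,
      M.mulVec y j = C * (y (j + 1) + y (j - 1) - 2 * Real.cos θ * y j) := by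
    intro y j
    have hterm : ∀ k : ZMod n, M j k * y k =
        (if k = j then C * (-2 * Real.cos θ) * y k else 0)
        + ((if k = j + 1 then C * y k else 0)
        + (if k = j - 1 then C * y k else 0)) := by
      intro k
      rw [hM]
      by_cases e1 : k = j
      · subst e1
        rw [if_pos rfl, if_pos rfl, if_neg (Ne.symm (d1 k)), if_neg (Ne.symm (d2 k))]
        ring
      · rw [if_neg e1, if_neg e1]
        by_cases e2 : k = j + 1
        · rw [if_pos (Or.inl e2), if_pos e2,
            if_neg (fun h : k = j - 1 => d3 j (e2.symm.trans h))]
          ring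
        · by_cases e3 : k = j - 1
          · rw [if_pos (Or.inr e3), if_neg e2, if_pos e3]; ring
          · rw [if_neg (by tauto), if_neg e2, if_neg e3]; ring
    show (fun i => M i ⬝ᵥ y) j = _
    simp only [dotProduct]
    simp_rw [hterm]
    rw [Finset.sum_add_distrib, Finset.sum_add_distrib]
    simp only [Finset.sum_ite_eq' Finset.univ, Finset.mem_univ, if_true]
    ring
  -- quadratic form
  have hQ : ∀ y : ZMod n → ℝ, y ⬝ᵥ M.mulVec y
      = C * ((∑ j : ZMod n, y (j - 1) * y j) + (∑ j : ZMod n, y (j + 1) * y j)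
          - 2 * Real.cos θ * ∑ j : ZMod n, y j * y j) := by
    intro y
    have hpt : ∀ j : ZMod n, y j * M.mulVec y j
        = C * (y (j + 1) * y j) + (C * (y (j - 1) * y j)
            - C * (2 * Real.cos θ) * (y j * y j)) := by
      intro j; rw [hmv]; ring
    rw [dotProduct]
    simp_rw [hpt]
    rw [Finset.sum_add_distrib, Finset.sum_sub_distrib,
      ← Finset.mul_sum, ← Finset.mul_sum, ← Finset.mul_sum]
    ring
  -- the functional and subspaces
  let ℓ : (ZMod n → ℝ) →ₗ[ℝ] ℝ :=
    { toFun := fun y => ∑ j, y j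
      map_add' := fun a b => by simp [Finset.sum_add_distrib]
      map_smul' := fun t a => by simp [Finset.mul_sum] }
  let ones : ZMod n → ℝ := fun _ => (1 : ℝ)
  have hones0 : ones ≠ 0 := by
    intro h
    have := congrFun h 0
    simp [ones] at this
  have hℓones : ℓ ones = n := by
    show (∑ _j : ZMod n, (1 : ℝ)) = n
    simp [Finset.card_univ, ZMod.card]
  set Wp := Submodule.span ℝ {ones} with hWpdef
  set Wm := LinearMap.ker ℓ with hWmdef
  have hrankp : Module.finrank ℝ Wp = 1 := finrank_span_singleton hones0
  have htot : Module.finrank ℝ (ZMod n → ℝ) = n := by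
    rw [Module.finrank_fintype_fun_eq_card, ZMod.card]
  have hsurj : LinearMap.range ℓ = ⊤ := by
    rw [LinearMap.range_eq_top]
    intro r
    refine ⟨(r / n) • ones, ?_⟩
    rw [LinearMap.map_smul, hℓones]
    simp only [smul_eq_mul]
    field_simp
  have hrankm : Module.finrank ℝ Wm = n - 1 := by
    have h := LinearMap.finrank_range_add_finrank_ker ℓ
    rw [← hWmdef] at h
    rw [hsurj, finrank_top, Module.finrank_self, htot] at h
    omega
  -- positivity on Wp
  have hPos : ∀ x ∈ Wp, x ≠ 0 → 0 < x ⬝ᵥ M.mulVec x := by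
    intro x hx hx0
    obtain ⟨t, rfl⟩ := Submodule.mem_span_singleton.mp hx
    have ht : t ≠ 0 := fun h => hx0 (by rw [h, zero_smul])
    have hxj : ∀ j : ZMod n, (t • ones) j = t := fun j => by simp [ones]
    rw [hQ]
    simp only [hxj]
    rw [Finset.sum_const, Finset.card_univ, ZMod.card, nsmul_eq_mul]
    have htt : 0 < t * t := mul_self_pos.mpr ht
    have hrw : C * ((n : ℝ) * (t * t) + (n : ℝ) * (t * t)
        - 2 * Real.cos θ * ((n : ℝ) * (t * t)))
        = C * ((n : ℝ) * (t * t)) * (2 - 2 * Real.cos θ) := by ring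
    rw [hrw]
    exact mul_pos (mul_pos hC (mul_pos hn0 htt)) (by linarith)
  -- negativity on Wm
  have hNeg : ∀ x ∈ Wm, x ≠ 0 → x ⬝ᵥ M.mulVec x < 0 := by
    intro x hx hx0
    have hxsum : ∑ j : ZMod n, x j = 0 := LinearMap.mem_ker.mp hx
    set c : ZMod n → ℂ := fun k => ∑ j : ZMod n, (x j : ℂ) * CircAux.chi n (k * j)
      with hcdef
    have hcorr : ∀ a : ZMod n,
        ∑ k : ZMod n, (Complex.normSq (c k) : ℂ) * CircAux.chi n (k * a)
          = n * ∑ j : ZMod n, (x (j - a) : ℂ) * x j := by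
      intro a
      have h := CircAux.corr n x a
      simp_rw [Complex.mul_conj] at h
      exact h
    have hc0 : c 0 = 0 := by
      calc c 0 = ∑ j : ZMod n, (x j : ℂ) := by
            refine Finset.sum_congr rfl fun j _ => ?_
            rw [zero_mul, CircAux.chi_zero, mul_one]
        _ = ((∑ j : ZMod n, x j : ℝ) : ℂ) := by push_cast; rfl
        _ = 0 := by rw [hxsum, Complex.ofReal_zero]
    have hpar : ∑ k : ZMod n, Complex.normSq (c k) = n * ∑ j : ZMod n, x j * x j := by
      have h0 := hcorr 0
      simp_rw [mul_zero, CircAux.chi_zero, mul_one, sub_zero] at h0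
      have : ((∑ k : ZMod n, Complex.normSq (c k) : ℝ) : ℂ)
          = (((n : ℝ) * ∑ j : ZMod n, x j * x j : ℝ) : ℂ) := by
        push_cast
        exact h0
      exact_mod_cast this
    set R : ℝ := (∑ j : ZMod n, x (j - 1) * x j) + (∑ j : ZMod n, x (j + 1) * x j)
        - 2 * Real.cos θ * ∑ j : ZMod n, x j * x j with hRdef
    set F : ℝ := ∑ k : ZMod n, Complex.normSq (c k)
        * (2 * Real.cos (2 * π * (k.val : ℝ) / n) - 2 * Real.cos θ) with hFdef
    have ha : (F : ℂ) = ∑ k : ZMod n, (Complex.normSq (c k) : ℂ)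
        * (CircAux.chi n k + CircAux.chi n (-k) - ((2 * Real.cos θ : ℝ) : ℂ)) := by
      rw [hFdef, Complex.ofReal_sum]
      refine Finset.sum_congr rfl fun k _ => ?_
      rw [Complex.ofReal_mul, Complex.ofReal_sub, ← CircAux.chi_re n k]
    have hb : ∑ k : ZMod n, (Complex.normSq (c k) : ℂ)
        * (CircAux.chi n k + CircAux.chi n (-k) - ((2 * Real.cos θ : ℝ) : ℂ))
        = (n : ℂ) * (∑ j : ZMod n, (x (j - 1) : ℂ) * x j)
          + (n : ℂ) * (∑ j : ZMod n, (x (j + 1) : ℂ) * x j)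
          - ((2 * Real.cos θ : ℝ) : ℂ) * ((n : ℂ) * ∑ j : ZMod n, (x j : ℂ) * x j) := by
      have e1 := hcorr 1
      have em1 := hcorr (-1)
      have e0 := hcorr 0
      simp_rw [mul_one] at e1
      simp_rw [mul_neg_one, sub_neg_eq_add] at em1
      simp_rw [mul_zero, CircAux.chi_zero, mul_one, sub_zero] at e0
      calc ∑ k : ZMod n, (Complex.normSq (c k) : ℂ)
            * (CircAux.chi n k + CircAux.chi n (-k) - ((2 * Real.cos θ : ℝ) : ℂ))
          = (∑ k : ZMod n, (Complex.normSq (c k) : ℂ) * CircAux.chi n k)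
            + (∑ k : ZMod n, (Complex.normSq (c k) : ℂ) * CircAux.chi n (-k))
            - ((2 * Real.cos θ : ℝ) : ℂ) * ∑ k : ZMod n, (Complex.normSq (c k) : ℂ) := by
            rw [Finset.mul_sum, ← Finset.sum_add_distrib, ← Finset.sum_sub_distrib]
            refine Finset.sum_congr rfl fun k _ => ?_
            ring
        _ = _ := by rw [e1, em1, e0]
    have hFR : F = n * R := by
      have : (F : ℂ) = ((n * R : ℝ) : ℂ) := by
        rw [ha, hb, hRdef]
        push_cast
        ring
      exact_mod_cast this
    have hx2pos : 0 < ∑ j : ZMod n, x j * x j := by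
      have hex : ∃ j, x j ≠ 0 := by
        by_contra h
        push_neg at h
        exact hx0 (funext fun j => h j)
      obtain ⟨j0, hj0⟩ := hex
      exact Finset.sum_pos' (fun j _ => mul_self_nonneg _)
        ⟨j0, Finset.mem_univ _, mul_self_pos.mpr hj0⟩
    have hwneg : ∀ k : ZMod n, k ≠ 0 →
        2 * Real.cos (2 * π * (k.val : ℝ) / n) - 2 * Real.cos θ < 0 := by
      intro k hk
      have hv1 : 1 ≤ k.val := by
        rcases Nat.eq_zero_or_pos k.val with h | h
        · exact absurd (by rwa [ZMod.val_eq_zero] at h) hk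
        · exact h
      have := CircAux.cos_lt_aux n hn θ hθ0 hθlt k.val hv1 k.val_lt
      linarith
    have hck : ∃ k0 : ZMod n, c k0 ≠ 0 := by
      by_contra h
      push_neg at h
      have : ∑ k : ZMod n, Complex.normSq (c k) = 0 := by
        refine Finset.sum_eq_zero fun k _ => ?_
        rw [h k, map_zero]
      rw [hpar] at this
      nlinarith
    obtain ⟨k0, hk0⟩ := hck
    have hk00 : k0 ≠ 0 := fun h => hk0 (h ▸ hc0)
    have hFneg : F < 0 := by
      have hz : (0 : ℝ) = ∑ _k : ZMod n, (0 : ℝ) := by simp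
      rw [hFdef, hz]
      apply Finset.sum_lt_sum
      · intro k _
        by_cases hk : k = 0
        · subst hk; rw [hc0]; simp
        · exact mul_nonpos_of_nonneg_of_nonpos (Complex.normSq_nonneg _) (hwneg k hk).le
      · exact ⟨k0, Finset.mem_univ _,
          mul_neg_of_pos_of_neg (Complex.normSq_pos.mpr hk0) (hwneg k0 hk00)⟩
    have hRneg : R < 0 := by nlinarith
    calc x ⬝ᵥ M.mulVec x = C * R := by rw [hQ, ← hRdef]
      _ < 0 := mul_neg_of_pos_of_neg hC hRneg
  -- complementarity
  have hdisj : Disjoint Wp Wm := by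
    rw [Submodule.disjoint_def]
    intro x hxp hxm
    obtain ⟨t, rfl⟩ := Submodule.mem_span_singleton.mp hxp
    have h0 : ℓ (t • ones) = 0 := LinearMap.mem_ker.mp hxm
    rw [LinearMap.map_smul, hℓones, smul_eq_mul] at h0
    rcases mul_eq_zero.mp h0 with h | h
    · rw [h, zero_smul]
    · exact absurd h (by positivity)
  have hcodis : Codisjoint Wp Wm := by
    rw [codisjoint_iff, eq_top_iff]
    intro x _
    have hx : x = (ℓ x / n) • ones + (x - (ℓ x / n) • ones) := by
      rw [add_sub_cancel]
    rw [hx]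
    apply Submodule.add_mem_sup
    · exact Submodule.smul_mem _ _ (Submodule.mem_span_singleton_self ones)
    · show x - (ℓ x / n) • ones ∈ LinearMap.ker ℓ
      rw [LinearMap.mem_ker, map_sub, LinearMap.map_smul, hℓones, smul_eq_mul]
      field_simp
      ring
  have hcompl : IsCompl Wp Wm := ⟨hdisj, hcodis⟩
  -- invertibility
  have hBsym : ∀ u v : ZMod n → ℝ, u ⬝ᵥ M.mulVec v = v ⬝ᵥ M.mulVec u := by
    intro u v
    rw [Matrix.dotProduct_mulVec, ← Matrix.mulVec_transpose, hsymm]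
    exact dotProduct_comm _ _
  have hker : ∀ x : ZMod n → ℝ, M.mulVec x = 0 → x = 0 := by
    intro x hxk
    have hxtop : x ∈ Wp ⊔ Wm := by
      rw [codisjoint_iff.mp hcodis]; exact Submodule.mem_top
    obtain ⟨p, hp, m, hm, hpm⟩ := Submodule.mem_sup.mp hxtop
    have hBpx : p ⬝ᵥ M.mulVec x = 0 := by rw [hxk, dotProduct_zero]
    have hBmx : m ⬝ᵥ M.mulVec x = 0 := by rw [hxk, dotProduct_zero]
    rw [← hpm, Matrix.mulVec_add, dotProduct_add] at hBpx hBmx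
    have hsym' : p ⬝ᵥ M.mulVec m = m ⬝ᵥ M.mulVec p := hBsym p m
    have hpp : p ⬝ᵥ M.mulVec p = m ⬝ᵥ M.mulVec m := by linarith
    have hp0 : p = 0 := by
      by_contra h
      have h1 : 0 < p ⬝ᵥ M.mulVec p := hPos p hp h
      rcases eq_or_ne m 0 with hm0 | hm0
      · rw [hm0] at hpp
        simp [Matrix.mulVec_zero] at hpp
        linarith
      · have h2 : m ⬝ᵥ M.mulVec m < 0 := hNeg m hm hm0
        linarith
    have hm0 : m = 0 := by
      by_contra h
      have h2 : m ⬝ᵥ M.mulVec m < 0 := hNeg m hm h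
      rw [hp0] at hpp
      simp [zero_dotProduct] at hpp
      linarith
    rw [← hpm, hp0, hm0, add_zero]
  have hunit : IsUnit M := by
    rw [← Matrix.mulVec_injective_iff_isUnit]
    intro a b hab
    have h0 : M.mulVec (a - b) = 0 := by
      rw [Matrix.mulVec_sub, hab, sub_self]
    exact sub_eq_zero.mp (hker _ h0)
  exact ⟨hsymm, hunit, Wp, Wm, hrankp, hrankm, hcompl, hPos, hNeg⟩
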